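/- Let Ω be a finite set and let c : Ω × Ω → ℝ be symmetric, nonnegative, vanish on the diagonal, and have connected positivity graph E = {{x,y} : c(x,y) > 0}. For probability vectors μ, ν on Ω define W_{c,2}(μ, ν) as the square root of the minimum of (1/2)·Σ_{x,y : c(x,y)>0} J(x,y)²/c(x,y) over all antisymmetric J : Ω × Ω → ℝ vanishing wherever c(x,y) = 0 and satisfying (ν(x) − μ(x)) + Σ_{y∈Ω} J(x,y) = 0 for all x ∈ Ω. Then W_{c,2} is a metric on the set of probability vectors on Ω: W_{c,2}(μ,ν) ≥ 0 with equality if and only if μ = ν; W_{c,2}(μ,ν) = W_{c,2}(ν,μ); and W_{c,2}(μ,σ) ≤ W_{c,2}(μ,ν) + W_{c,2}(ν,σ) for all probability vectors μ, ν, σ on Ω. -/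

import Mathlib

open Finset

/-- The positivity graph of a symmetric capacity function `c`. -/
def posGraph {Ω : Type*} (c : Ω → Ω → ℝ) : SimpleGraph Ω where
  Adj x y := x ≠ y ∧ 0 < c x y ∧ 0 < c y x
  symm := ⟨fun x y h => ⟨h.1.symm, h.2.2, h.2.1⟩⟩
  loopless := ⟨fun x h => h.1 rfl⟩

/-- The discrete Wasserstein-2 distance associated with a fixed capacity `c`,
in the dual flux formulation. -/
noncomputable def Wc2 {Ω : Type*} [Fintype Ω] (c : Ω → Ω → ℝ) (μ ν : Ω → ℝ) : ℝ :=
  Real.sqrt (sInf {v : ℝ | ∃ J : Ω → Ω → ℝ,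
    (∀ x y, J x y = - J y x) ∧
    (∀ x y, c x y = 0 → J x y = 0) ∧
    (∀ x, (ν x - μ x) + ∑ y, J x y = 0) ∧
    v = (1 / 2) * ∑ x, ∑ y, if 0 < c x y then J x y ^ 2 / c x y else 0})

section helpers
variable {Ω : Type*} [Fintype Ω]

/-- The admissible-flux value set. -/
def fluxSet (c : Ω → Ω → ℝ) (μ ν : Ω → ℝ) : Set ℝ :=
  {v : ℝ | ∃ J : Ω → Ω → ℝ,
    (∀ x y, J x y = - J y x) ∧
    (∀ x y, c x y = 0 → J x y = 0) ∧
    (∀ x, (ν x - μ x) + ∑ y, J x y = 0) ∧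
    v = (1 / 2) * ∑ x, ∑ y, if 0 < c x y then J x y ^ 2 / c x y else 0}

lemma Wc2_eq (c : Ω → Ω → ℝ) (μ ν : Ω → ℝ) :
    Wc2 c μ ν = Real.sqrt (sInf (fluxSet c μ ν)) := rfl

lemma fluxSet_nonneg (c : Ω → Ω → ℝ) (μ ν : Ω → ℝ) :
    ∀ v ∈ fluxSet c μ ν, (0:ℝ) ≤ v := by
  rintro v ⟨J, -, -, -, rfl⟩
  have : ∀ x y : Ω, (0:ℝ) ≤ if 0 < c x y then J x y ^ 2 / c x y else 0 := by
    intro x y; split_ifs with h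
    · positivity
    · exact le_rfl
  exact mul_nonneg (by norm_num) (Finset.sum_nonneg fun x _ =>
    Finset.sum_nonneg fun y _ => this x y)

section flux
variable [DecidableEq Ω]

lemma flux_of_reachable (c : Ω → Ω → ℝ) {a b : Ω}
    (h : (posGraph c).Reachable a b) :
    ∃ J : Ω → Ω → ℝ, (∀ x y, J x y = - J y x) ∧ (∀ x y, c x y = 0 → J x y = 0) ∧
      ∀ x, ∑ y, J x y = (if x = a then (1:ℝ) else 0) - (if x = b then 1 else 0) := by
  obtain ⟨w⟩ := h
  induction w with
  | nil => exact ⟨0, by simp, by simp, by simp⟩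
  | @cons u v b' hadj p ih =>
    obtain ⟨J', h1, h2, h3⟩ := ih
    refine ⟨fun x y => ((if x = u ∧ y = v then (1:ℝ) else 0)
      - (if y = u ∧ x = v then 1 else 0)) + J' x y, ?_, ?_, ?_⟩
    · intro x y
      dsimp only
      simp only [h1 x y]
      ring
    · intro x y hc
      dsimp only
      rw [h2 x y hc]
      have h0 : ¬ (x = u ∧ y = v) := by
        rintro ⟨rfl, rfl⟩; exact absurd hc (ne_of_gt (show _ ≠ _ ∧ 0 < c _ _ ∧ 0 < c _ _ from hadj).2.1)
      have h0' : ¬ (y = u ∧ x = v) := by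
        rintro ⟨rfl, rfl⟩; exact absurd hc (ne_of_gt (show _ ≠ _ ∧ 0 < c _ _ ∧ 0 < c _ _ from hadj).2.2)
      simp [h0, h0']
    · intro x
      dsimp only
      rw [Finset.sum_add_distrib, h3 x, Finset.sum_sub_distrib]
      have e1 : ∑ y, (if x = u ∧ y = v then (1:ℝ) else 0) = if x = u then 1 else 0 := by
        simp [ite_and]
      have e2 : ∑ y, (if y = u ∧ x = v then (1:ℝ) else 0) = if x = v then 1 else 0 := by
        by_cases hx : x = v <;> simp [hx]
      rw [e1, e2]
      ring

lemma exists_flux (c : Ω → Ω → ℝ) (hconn : (posGraph c).Connected)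
    (f : Ω → ℝ) (hf : ∑ x, f x = 0) :
    ∃ J : Ω → Ω → ℝ, (∀ x y, J x y = - J y x) ∧ (∀ x y, c x y = 0 → J x y = 0) ∧
      ∀ x, ∑ y, J x y = f x := by
  obtain ⟨o⟩ := hconn.nonempty
  choose Jb h1 h2 h3 using fun b => flux_of_reachable c (hconn.preconnected b o)
  refine ⟨fun x y => ∑ b, f b * Jb b x y, ?_, ?_, ?_⟩
  · intro x y
    rw [← Finset.sum_neg_distrib]
    exact Finset.sum_congr rfl fun b _ => by rw [h1 b x y]; ring
  · intro x y hc
    exact Finset.sum_eq_zero fun b _ => by rw [h2 b x y hc, mul_zero]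
  · intro x
    rw [Finset.sum_comm]
    have e : ∀ b, ∑ y, f b * Jb b x y
        = f b * ((if x = b then (1:ℝ) else 0) - (if x = o then 1 else 0)) := by
      intro b; rw [← Finset.mul_sum, h3 b x]
    simp only [e]
    rw [Finset.sum_congr rfl (fun b _ => mul_sub (f b) _ _), Finset.sum_sub_distrib]
    rw [← Finset.sum_mul, hf]
    simp [mul_ite]

end flux

lemma fluxSet_nonempty (c : Ω → Ω → ℝ) (hconn : (posGraph c).Connected)
    (μ ν : Ω → ℝ) (hsum : ∑ x, μ x = ∑ x, ν x) :
    (fluxSet c μ ν).Nonempty := by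
  classical
  obtain ⟨J, h1, h2, h3⟩ := exists_flux c hconn (fun x => μ x - ν x)
    (by rw [Finset.sum_sub_distrib, hsum, sub_self])
  exact ⟨_, J, h1, h2, fun x => by rw [h3 x]; ring, rfl⟩

lemma energy_add_le (c : Ω → Ω → ℝ) (J1 J2 : Ω → Ω → ℝ) :
    (1 / 2) * ∑ x, ∑ y, (if 0 < c x y then (J1 x y + J2 x y) ^ 2 / c x y else 0)
      ≤ (Real.sqrt ((1 / 2) * ∑ x, ∑ y, (if 0 < c x y then J1 x y ^ 2 / c x y else 0))
        + Real.sqrt ((1 / 2) * ∑ x, ∑ y, (if 0 < c x y then J2 x y ^ 2 / c x y else 0))) ^ 2 := by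
  classical
  set s : Finset (Ω × Ω) := Finset.univ ×ˢ Finset.univ with hs
  set A : Ω × Ω → ℝ := fun p => if 0 < c p.1 p.2 then J1 p.1 p.2 / Real.sqrt (c p.1 p.2) else 0
    with hA
  set B : Ω × Ω → ℝ := fun p => if 0 < c p.1 p.2 then J2 p.1 p.2 / Real.sqrt (c p.1 p.2) else 0
    with hB
  have hA2 : ∀ p : Ω × Ω, A p ^ 2 = if 0 < c p.1 p.2 then J1 p.1 p.2 ^ 2 / c p.1 p.2 else 0 := by
    intro p; rw [hA]; dsimp only; split_ifs with h
    · rw [div_pow, Real.sq_sqrt h.le]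
    · rw [zero_pow two_ne_zero]
  have hB2 : ∀ p : Ω × Ω, B p ^ 2 = if 0 < c p.1 p.2 then J2 p.1 p.2 ^ 2 / c p.1 p.2 else 0 := by
    intro p; rw [hB]; dsimp only; split_ifs with h
    · rw [div_pow, Real.sq_sqrt h.le]
    · rw [zero_pow two_ne_zero]
  have hAB2 : ∀ p : Ω × Ω, (A p + B p) ^ 2
      = if 0 < c p.1 p.2 then (J1 p.1 p.2 + J2 p.1 p.2) ^ 2 / c p.1 p.2 else 0 := by
    intro p; rw [hA, hB]; dsimp only; split_ifs with h
    · rw [← add_div, div_pow, Real.sq_sqrt h.le]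
    · rw [add_zero, zero_pow two_ne_zero]
  have eA : (∑ x, ∑ y, (if 0 < c x y then J1 x y ^ 2 / c x y else 0)) = ∑ p ∈ s, A p ^ 2 := by
    have h1 : (∑ x, ∑ y, (if 0 < c x y then J1 x y ^ 2 / c x y else 0))
        = ∑ x, ∑ y, A (x, y) ^ 2 :=
      Finset.sum_congr rfl fun x _ => Finset.sum_congr rfl fun y _ => (hA2 (x, y)).symm
    rw [h1, hs]
    exact (Finset.sum_product Finset.univ Finset.univ fun p => A p ^ 2).symm
  have eB : (∑ x, ∑ y, (if 0 < c x y then J2 x y ^ 2 / c x y else 0)) = ∑ p ∈ s, B p ^ 2 := by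
    have h1 : (∑ x, ∑ y, (if 0 < c x y then J2 x y ^ 2 / c x y else 0))
        = ∑ x, ∑ y, B (x, y) ^ 2 :=
      Finset.sum_congr rfl fun x _ => Finset.sum_congr rfl fun y _ => (hB2 (x, y)).symm
    rw [h1, hs]
    exact (Finset.sum_product Finset.univ Finset.univ fun p => B p ^ 2).symm
  have eAB : (∑ x, ∑ y, (if 0 < c x y then (J1 x y + J2 x y) ^ 2 / c x y else 0))
      = ∑ p ∈ s, (A p + B p) ^ 2 := by
    have h1 : (∑ x, ∑ y, (if 0 < c x y then (J1 x y + J2 x y) ^ 2 / c x y else 0))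
        = ∑ x, ∑ y, (A (x, y) + B (x, y)) ^ 2 :=
      Finset.sum_congr rfl fun x _ => Finset.sum_congr rfl fun y _ => (hAB2 (x, y)).symm
    rw [h1, hs]
    exact (Finset.sum_product Finset.univ Finset.univ fun p => (A p + B p) ^ 2).symm
  rw [eA, eB, eAB]
  have hEA0 : (0:ℝ) ≤ ∑ p ∈ s, A p ^ 2 := Finset.sum_nonneg fun p _ => sq_nonneg _
  have hEB0 : (0:ℝ) ≤ ∑ p ∈ s, B p ^ 2 := Finset.sum_nonneg fun p _ => sq_nonneg _
  have expand : ∑ p ∈ s, (A p + B p) ^ 2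
      = ∑ p ∈ s, A p ^ 2 + 2 * (∑ p ∈ s, A p * B p) + ∑ p ∈ s, B p ^ 2 := by
    have h1 : ∀ p : Ω × Ω, (A p + B p) ^ 2 = A p ^ 2 + 2 * (A p * B p) + B p ^ 2 :=
      fun p => by ring
    simp only [h1, Finset.sum_add_distrib, Finset.mul_sum]
  have CS : (∑ p ∈ s, A p * B p) ^ 2 ≤ (∑ p ∈ s, A p ^ 2) * ∑ p ∈ s, B p ^ 2 :=
    Finset.sum_mul_sq_le_sq_mul_sq s A B
  have hsab : ∑ p ∈ s, A p * B p ≤ Real.sqrt ((∑ p ∈ s, A p ^ 2) * ∑ p ∈ s, B p ^ 2) :=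
    calc ∑ p ∈ s, A p * B p ≤ |∑ p ∈ s, A p * B p| := le_abs_self _
    _ = Real.sqrt ((∑ p ∈ s, A p * B p) ^ 2) := (Real.sqrt_sq_eq_abs _).symm
    _ ≤ _ := Real.sqrt_le_sqrt CS
  set t1 := Real.sqrt (1 / 2 * ∑ p ∈ s, A p ^ 2) with ht1
  set t2 := Real.sqrt (1 / 2 * ∑ p ∈ s, B p ^ 2) with ht2
  have ht1sq : t1 ^ 2 = 1 / 2 * ∑ p ∈ s, A p ^ 2 := Real.sq_sqrt (by linarith)
  have ht2sq : t2 ^ 2 = 1 / 2 * ∑ p ∈ s, B p ^ 2 := Real.sq_sqrt (by linarith)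
  have h4 : Real.sqrt 4 = 2 := by
    rw [show (4:ℝ) = 2 ^ 2 by norm_num]; exact Real.sqrt_sq (by norm_num)
  have hsqrtmul : Real.sqrt ((∑ p ∈ s, A p ^ 2) * ∑ p ∈ s, B p ^ 2) = 2 * (t1 * t2) := by
    rw [show (∑ p ∈ s, A p ^ 2) * ∑ p ∈ s, B p ^ 2
      = 4 * ((1 / 2 * ∑ p ∈ s, A p ^ 2) * (1 / 2 * ∑ p ∈ s, B p ^ 2)) by ring,
      Real.sqrt_mul (by norm_num), h4]
    rw [ht1, ht2, ← Real.sqrt_mul (by linarith)]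
  rw [expand]
  nlinarith [hsab, hsqrtmul, ht1sq, ht2sq]

lemma fluxSet_symm_subset (c : Ω → Ω → ℝ) (μ ν : Ω → ℝ) :
    fluxSet c μ ν ⊆ fluxSet c ν μ := by
  rintro v ⟨J, h1, h2, h3, rfl⟩
  refine ⟨fun x y => - J x y, ?_, ?_, ?_, ?_⟩
  · intro x y; dsimp only; rw [h1 x y]
  · intro x y hc; dsimp only; rw [h2 x y hc]; exact neg_zero
  · intro x; dsimp only
    rw [Finset.sum_neg_distrib]
    have := h3 x; linarith
  · congr 1
    refine Finset.sum_congr rfl fun x _ => Finset.sum_congr rfl fun y _ => ?_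
    by_cases h : 0 < c x y <;> simp [h]

lemma fluxSet_lower_bound (c : Ω → Ω → ℝ) (hnonneg : ∀ x y, 0 ≤ c x y)
    (hconn : (posGraph c).Connected) (μ ν : Ω → ℝ)
    (hμ1 : ∑ x, μ x = 1) (hν1 : ∑ x, ν x = 1) {x0 : Ω} (hd : μ x0 ≠ ν x0) :
    ∃ ε > 0, ∀ v ∈ fluxSet c μ ν, ε ≤ v := by
  classical
  -- there is another point
  have hy0 : ∃ y0 : Ω, y0 ≠ x0 := by
    by_contra h
    push_neg at h
    have huniv : (Finset.univ : Finset Ω) = {x0} :=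
      Finset.eq_singleton_iff_unique_mem.2 ⟨Finset.mem_univ _, fun y _ => h y⟩
    rw [huniv, Finset.sum_singleton] at hμ1 hν1
    exact hd (hμ1.trans hν1.symm)
  obtain ⟨y0, hy0⟩ := hy0
  obtain ⟨w⟩ := hconn.preconnected x0 y0
  -- x0 has a neighbour
  have hadj : ∃ z, (posGraph c).Adj x0 z := by
    cases w with
    | nil => exact absurd rfl hy0.symm
    | cons hadj p => exact ⟨_, hadj⟩
  obtain ⟨z, hadj⟩ := hadj
  set C := ∑ y, c x0 y with hC
  have hC0 : 0 < C :=
    lt_of_lt_of_le (show _ ≠ _ ∧ 0 < c _ _ ∧ 0 < c _ _ from hadj).2.1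
      (Finset.single_le_sum (fun y _ => hnonneg x0 y) (Finset.mem_univ z))
  have hdne : ν x0 - μ x0 ≠ 0 := sub_ne_zero.2 fun h => hd h.symm
  refine ⟨(ν x0 - μ x0) ^ 2 / (2 * C), by positivity, ?_⟩
  rintro v ⟨J, h1, h2, h3, rfl⟩
  set f : Ω → ℝ := fun y => Real.sqrt (c x0 y) with hf
  set g : Ω → ℝ := fun y => if 0 < c x0 y then J x0 y / Real.sqrt (c x0 y) else 0 with hg
  have hfg : ∀ y, f y * g y = J x0 y := by
    intro y
    rw [hf, hg]; dsimp only
    by_cases h : 0 < c x0 y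
    · rw [if_pos h, mul_comm, div_mul_cancel₀ _ (ne_of_gt (Real.sqrt_pos.2 h))]
    · have hc0 : c x0 y = 0 := le_antisymm (le_of_not_gt h) (hnonneg x0 y)
      rw [if_neg h, mul_zero, h2 x0 y hc0]
  have hf2 : ∑ y, f y ^ 2 = C := by
    rw [hC]
    exact Finset.sum_congr rfl fun y _ => Real.sq_sqrt (hnonneg x0 y)
  have hg2 : ∑ y, g y ^ 2 = ∑ y, (if 0 < c x0 y then J x0 y ^ 2 / c x0 y else 0) := by
    refine Finset.sum_congr rfl fun y _ => ?_
    rw [hg]; dsimp only; split_ifs with h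
    · rw [div_pow, Real.sq_sqrt h.le]
    · rw [zero_pow two_ne_zero]
  have CS : (∑ y, f y * g y) ^ 2 ≤ (∑ y, f y ^ 2) * ∑ y, g y ^ 2 :=
    Finset.sum_mul_sq_le_sq_mul_sq Finset.univ f g
  have hJsum : ∑ y, J x0 y = -(ν x0 - μ x0) := by have := h3 x0; linarith
  have hd2 : (ν x0 - μ x0) ^ 2 ≤ C * ∑ y, (if 0 < c x0 y then J x0 y ^ 2 / c x0 y else 0) := by
    have e : (∑ y, f y * g y) ^ 2 = (ν x0 - μ x0) ^ 2 := by
      rw [Finset.sum_congr rfl fun y _ => hfg y, hJsum]; ring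
    rw [← e, ← hf2, ← hg2]; exact CS
  have hrest : ∑ y, (if 0 < c x0 y then J x0 y ^ 2 / c x0 y else 0)
      ≤ ∑ x, ∑ y, (if 0 < c x y then J x y ^ 2 / c x y else 0) := by
    refine Finset.single_le_sum (f := fun x => ∑ y, (if 0 < c x y then J x y ^ 2 / c x y else 0))
      (fun x _ => Finset.sum_nonneg fun y _ => ?_) (Finset.mem_univ x0)
    split_ifs with h
    · positivity
    · exact le_rfl
  rw [div_le_iff₀ (by linarith)]
  nlinarith [mul_le_mul_of_nonneg_left hrest hC0.le]

end helpers


/-- `W_{c,2}` is a metric on the set of probability vectors on `Ω`. -/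
theorem Wc2_is_metric {Ω : Type*} [Fintype Ω] (c : Ω → Ω → ℝ)
    (hsymm : ∀ x y, c x y = c y x)
    (hnonneg : ∀ x y, 0 ≤ c x y)
    (hdiag : ∀ x, c x x = 0)
    (hconn : (posGraph c).Connected) :
    (∀ μ ν : Ω → ℝ, (∀ x, 0 ≤ μ x) → (∑ x, μ x = 1) → (∀ x, 0 ≤ ν x) → (∑ x, ν x = 1) →
      0 ≤ Wc2 c μ ν ∧ (Wc2 c μ ν = 0 ↔ μ = ν)) ∧
    (∀ μ ν : Ω → ℝ, (∀ x, 0 ≤ μ x) → (∑ x, μ x = 1) → (∀ x, 0 ≤ ν x) → (∑ x, ν x = 1) →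
      Wc2 c μ ν = Wc2 c ν μ) ∧
    (∀ μ ν σ : Ω → ℝ, (∀ x, 0 ≤ μ x) → (∑ x, μ x = 1) → (∀ x, 0 ≤ ν x) → (∑ x, ν x = 1) →
      (∀ x, 0 ≤ σ x) → (∑ x, σ x = 1) →
      Wc2 c μ σ ≤ Wc2 c μ ν + Wc2 c ν σ) := by
  classical
  have hbdd : ∀ μ ν : Ω → ℝ, BddBelow (fluxSet c μ ν) :=
    fun μ ν => ⟨0, fun v hv => fluxSet_nonneg c μ ν v hv⟩
  refine ⟨?_, ?_, ?_⟩
  · -- nonnegativity and separation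
    intro μ ν hμ0 hμ1 hν0 hν1
    refine ⟨by rw [Wc2_eq]; exact Real.sqrt_nonneg _, ?_, ?_⟩
    · intro h0
      by_contra hne
      have hx0 : ∃ x0, μ x0 ≠ ν x0 := by
        by_contra h; push_neg at h; exact hne (funext h)
      obtain ⟨x0, hd⟩ := hx0
      obtain ⟨ε, hε, hub⟩ := fluxSet_lower_bound c hnonneg hconn μ ν hμ1 hν1 hd
      have hne' : (fluxSet c μ ν).Nonempty :=
        fluxSet_nonempty c hconn μ ν (by rw [hμ1, hν1])
      have hεle : ε ≤ sInf (fluxSet c μ ν) := le_csInf hne' hub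
      have hpos : 0 < Wc2 c μ ν := by
        rw [Wc2_eq]; exact Real.sqrt_pos.2 (lt_of_lt_of_le hε hεle)
      exact absurd h0 (ne_of_gt hpos)
    · rintro rfl
      have h0mem : (0:ℝ) ∈ fluxSet c μ μ :=
        ⟨0, by simp, by simp, by simp, by simp⟩
      have hinf : sInf (fluxSet c μ μ) = 0 :=
        le_antisymm (csInf_le (hbdd μ μ) h0mem)
          (le_csInf ⟨0, h0mem⟩ (fluxSet_nonneg c μ μ))
      rw [Wc2_eq, hinf, Real.sqrt_zero]
  · -- symmetry
    intro μ ν _ _ _ _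
    have hset : fluxSet c μ ν = fluxSet c ν μ :=
      subset_antisymm (fluxSet_symm_subset c μ ν) (fluxSet_symm_subset c ν μ)
    rw [Wc2_eq, Wc2_eq, hset]
  · -- triangle inequality
    intro μ ν σ hμ0 hμ1 hν0 hν1 hσ0 hσ1
    rw [Wc2_eq, Wc2_eq, Wc2_eq]
    have hS1 : (fluxSet c μ ν).Nonempty :=
      fluxSet_nonempty c hconn μ ν (by rw [hμ1, hν1])
    have hS2 : (fluxSet c ν σ).Nonempty :=
      fluxSet_nonempty c hconn ν σ (by rw [hν1, hσ1])
    set A := sInf (fluxSet c μ ν) with hA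
    set B := sInf (fluxSet c ν σ) with hB
    have hA0 : 0 ≤ A := le_csInf hS1 (fluxSet_nonneg c μ ν)
    have hB0 : 0 ≤ B := le_csInf hS2 (fluxSet_nonneg c ν σ)
    apply le_of_forall_pos_le_add
    intro ε hε
    set δ := (ε / 2) ^ 2 with hδ
    have hδ0 : 0 < δ := by positivity
    obtain ⟨v1, hv1mem, hv1lt⟩ := exists_lt_of_csInf_lt hS1 (lt_add_of_pos_right A hδ0)
    obtain ⟨v2, hv2mem, hv2lt⟩ := exists_lt_of_csInf_lt hS2 (lt_add_of_pos_right B hδ0)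
    have hv10 : (0:ℝ) ≤ v1 := fluxSet_nonneg c μ ν v1 hv1mem
    have hv20 : (0:ℝ) ≤ v2 := fluxSet_nonneg c ν σ v2 hv2mem
    obtain ⟨J1, a1, s1, c1, e1⟩ := hv1mem
    obtain ⟨J2, a2, s2, c2, e2⟩ := hv2mem
    have hmem : ((1/2) * ∑ x, ∑ y, if 0 < c x y then (J1 x y + J2 x y) ^ 2 / c x y else 0)
        ∈ fluxSet c μ σ := by
      refine ⟨fun x y => J1 x y + J2 x y, ?_, ?_, ?_, rfl⟩
      · intro x y; dsimp only; rw [a1 x y, a2 x y]; ring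
      · intro x y hc; dsimp only; rw [s1 x y hc, s2 x y hc, add_zero]
      · intro x; dsimp only
        rw [Finset.sum_add_distrib]
        have := c1 x; have := c2 x; linarith
    have hT : sInf (fluxSet c μ σ) ≤ (Real.sqrt v1 + Real.sqrt v2) ^ 2 := by
      refine le_trans (csInf_le (hbdd μ σ) hmem) ?_
      have := energy_add_le c J1 J2
      rw [← e1, ← e2] at this
      exact this
    have hsq : Real.sqrt (sInf (fluxSet c μ σ)) ≤ Real.sqrt v1 + Real.sqrt v2 := by
      calc Real.sqrt (sInf (fluxSet c μ σ))
          ≤ Real.sqrt ((Real.sqrt v1 + Real.sqrt v2) ^ 2) := Real.sqrt_le_sqrt hT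
        _ = Real.sqrt v1 + Real.sqrt v2 := Real.sqrt_sq (by positivity)
    have hsqrtδ : Real.sqrt δ = ε / 2 := by
      rw [hδ, Real.sqrt_sq (by linarith)]
    have step : ∀ (X v : ℝ), 0 ≤ X → v < X + δ →
        Real.sqrt v ≤ Real.sqrt X + ε / 2 := by
      intro X v hX hv
      have h1 : Real.sqrt v ≤ Real.sqrt (X + δ) := Real.sqrt_le_sqrt hv.le
      have h2 : X + δ ≤ (Real.sqrt X + Real.sqrt δ) ^ 2 := by
        nlinarith [Real.sq_sqrt hX, Real.sq_sqrt hδ0.le, Real.sqrt_nonneg X,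
          Real.sqrt_nonneg δ]
      calc Real.sqrt v ≤ Real.sqrt ((Real.sqrt X + Real.sqrt δ) ^ 2) :=
            h1.trans (Real.sqrt_le_sqrt h2)
        _ = Real.sqrt X + Real.sqrt δ := Real.sqrt_sq (by positivity)
        _ = Real.sqrt X + ε / 2 := by rw [hsqrtδ]
    have k1 := step A v1 hA0 hv1lt
    have k2 := step B v2 hB0 hv2lt
    linarith
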